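/- arXiv:2010.13475 — 2 statements merged into one kernel-verified Lean document; each statement's English description precedes it below -/
import Mathlib

section
/- Let n ≥ 1 and let Γ = Γ(U_{6n}) be the non-commuting graph of U_{6n}. For every pair of distinct vertices u, v of Γ, the detour distance D(u, v) equals 5n − 1; that is, the longest path in Γ between any two distinct vertices has length 5n − 1 (it is a Hamiltonian path, visiting all 5n vertices). -/
/-- The inversion automorphism of `Multiplicative (ZMod 3)` (i.e. `b ↦ b⁻¹`). -/
def negAut : MulAut (Multiplicative (ZMod 3)) := MulEquiv.inv (Multiplicative (ZMod 3))

lemma negAut_sq : negAut * negAut = 1 := by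
  ext x
  simp [negAut]

/-- The action of `ZMod (2*n)` on `Multiplicative (ZMod 3)`, where the generator acts
by inversion (negation). -/
def U6nAct (n : ℕ) : Multiplicative (ZMod (2 * n)) →* MulAut (Multiplicative (ZMod 3)) :=
  AddMonoidHom.toMultiplicativeLeft
    (ZMod.lift (2 * n) ⟨zmultiplesHom _ (Additive.ofMul negAut), by
      show ((2 * n : ℕ) : ℤ) • Additive.ofMul negAut = 0
      have : negAut ^ (2 * n) = 1 := by
        rw [pow_mul, pow_two, negAut_sq, one_pow]
      rw [← zpow_natCast negAut, Nat.cast_mul] at this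
      rw [show ((2 * n : ℕ) : ℤ) • Additive.ofMul negAut
            = Additive.ofMul (negAut ^ ((2 * n : ℕ) : ℤ)) from rfl]
      rw [Nat.cast_mul, this]; rfl⟩)

/-- The group `U_{6n} = ⟨a, b | a^(2n) = b³ = 1, a⁻¹ b a = b⁻¹⟩`, realized as the
semidirect product `(ZMod 3) ⋊ (ZMod (2n))` where the generator of `ZMod (2n)` acts by
negation. -/
abbrev U6n (n : ℕ) := SemidirectProduct (Multiplicative (ZMod 3))
    (Multiplicative (ZMod (2 * n))) (U6nAct n)

/-- The generator `a` of `U_{6n}`, of order `2n`. -/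
def Ua (n : ℕ) : U6n n := SemidirectProduct.inr (Multiplicative.ofAdd 1)

/-- The generator `b` of `U_{6n}`, of order `3`. -/
def Ub (n : ℕ) : U6n n := SemidirectProduct.inl (Multiplicative.ofAdd 1)

/-- The non-commuting graph of `U_{6n}`: vertices are the non-central elements, two
distinct vertices are adjacent iff they do not commute. -/
def ncGraph (n : ℕ) : SimpleGraph {x : U6n n // x ∉ Subgroup.center (U6n n)} where
  Adj u v := u.val * v.val ≠ v.val * u.val
  symm := ⟨fun _ _ h => fun e => h e.symm⟩
  loopless := ⟨fun _ h => h rfl⟩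

lemma act_int (n : ℕ) (k : ℤ) :
    U6nAct n (Multiplicative.ofAdd ((k : ZMod (2*n)))) = negAut ^ k := by
  simp only [U6nAct, AddMonoidHom.toMultiplicativeLeft, MonoidHom.coe_mk, OneHom.coe_mk,
    Equiv.coe_fn_mk, AddMonoidHom.coe_mk]
  exact (congrArg Additive.toMul (ZMod.lift_coe _ _ k)).trans rfl

lemma two_dvd (n : ℕ) : (2:ℕ) ∣ 2 * n := ⟨n, rfl⟩

noncomputable def par (n : ℕ) (j : ZMod (2*n)) : ZMod 2 := ZMod.castHom (two_dvd n) (ZMod 2) j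

lemma negAut_sq' : negAut ^ (2:ℤ) = 1 := by rw [zpow_two]; exact negAut_sq

lemma act_eq (n : ℕ) (j : ZMod (2*n)) :
    U6nAct n (Multiplicative.ofAdd j) = if par n j = 0 then 1 else negAut := by
  obtain ⟨k, rfl⟩ := ZMod.intCast_surjective j
  rw [act_int]
  have hpar : par n (k : ZMod (2*n)) = (k : ZMod 2) := by simp [par]
  rw [hpar]
  rcases Int.even_or_odd k with ⟨m, rfl⟩ | ⟨m, rfl⟩
  · have h0 : ((m + m : ℤ) : ZMod 2) = 0 := by push_cast; exact CharTwo.add_self_eq_zero _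
    rw [if_pos h0, show m + m = 2 * m by ring, zpow_mul, negAut_sq', one_zpow]
  · have h1 : ((2 * m + 1 : ℤ) : ZMod 2) = 1 := by push_cast; rw [show (2:ZMod 2) = 0 from rfl]; ring
    rw [h1, if_neg (by decide), zpow_add, zpow_mul, negAut_sq', one_zpow, zpow_one, one_mul]

open Multiplicative SemidirectProduct


noncomputable def eR (n : ℕ) (u : U6n n) : ZMod 2 := par n (toAdd u.right)

lemma comm_iff (n : ℕ) (u v : U6n n) :
    u * v = v * u ↔
      toAdd u.left + (if eR n u = 0 then toAdd v.left else -toAdd v.left)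
        = toAdd v.left + (if eR n v = 0 then toAdd u.left else -toAdd u.left) := by
  rw [SemidirectProduct.ext_iff]
  have hr : (u*v).right = (v*u).right := mul_comm u.right v.right
  rw [and_iff_left hr, mul_left, mul_left]
  have hu : U6nAct n u.right = if eR n u = 0 then 1 else negAut := by
    unfold eR; rw [← act_eq n (toAdd u.right)]; rfl
  have hv : U6nAct n v.right = if eR n v = 0 then 1 else negAut := by
    unfold eR; rw [← act_eq n (toAdd v.right)]; rfl
  rw [hu, hv]
  rcases eq_or_ne (eR n u) 0 with h1 | h1 <;> rcases eq_or_ne (eR n v) 0 with h2 | h2 <;>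
    simp only [h1, h2, if_pos, if_neg, if_true, if_false, MulAut.one_apply] <;>
    constructor <;> intro h
  · have := congrArg toAdd h; simpa using this
  · exact toAdd.injective (by simpa using h)
  · have := congrArg toAdd h; simpa [negAut] using this
  · apply toAdd.injective; simpa [negAut] using h
  · have := congrArg toAdd h; simpa [negAut] using this
  · apply toAdd.injective; simpa [negAut] using h
  · have := congrArg toAdd h; simpa [negAut] using this
  · apply toAdd.injective; simpa [negAut] using h

lemma par_zero (n : ℕ) : par n 0 = 0 := map_zero (ZMod.castHom (two_dvd n) (ZMod 2))
lemma par_one (n : ℕ) : par n 1 = 1 := map_one (ZMod.castHom (two_dvd n) (ZMod 2))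

lemma mem_center_iff' (n : ℕ) (z : U6n n) :
    z ∈ Subgroup.center (U6n n) ↔ toAdd z.left = 0 ∧ eR n z = 0 := by
  rw [Subgroup.mem_center_iff]
  constructor
  · intro h
    have h1 := (comm_iff n (inl (ofAdd 1)) z).mp (h _)
    have h2 := (comm_iff n (inr (ofAdd 1)) z).mp (h _)
    have e1 : eR n (inl (ofAdd 1) : U6n n) = 0 := by
      show par n (toAdd (1 : Multiplicative (ZMod (2*n)))) = 0
      simpa using par_zero n
    have e2 : eR n (inr (ofAdd 1) : U6n n) = 1 := by
      show par n (toAdd (ofAdd (1 : ZMod (2*n)))) = 1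
      simpa using par_one n
    rw [e1, if_pos rfl] at h1
    rw [e2, if_neg (by decide)] at h2
    simp only [left_inl, right_inl, left_inr, toAdd_ofAdd, toAdd_one] at h1 h2
    -- h1 : 1 + toAdd z.left = toAdd z.left + (if eR n z = 0 then 1 else -1)
    -- h2 : 0 + (...) = toAdd z.left + (if eR n z = 0 then 0 else -0)
    simp only [neg_zero, ite_self] at h2
    have hz : toAdd z.left = 0 := by
      revert h2; generalize toAdd z.left = A; revert A; decide
    refine ⟨hz, ?_⟩
    by_contra h
    rw [if_neg h, hz] at h1
    revert h1; decide
  · intro hz g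
    rw [comm_iff]
    rw [hz.1, hz.2, if_pos rfl]
    rcases eq_or_ne (eR n g) 0 with h | h <;> simp [h]

noncomputable def part (n : ℕ) (u : U6n n) : Option (ZMod 3) :=
  if eR n u = 0 then none else some (toAdd u.left)

lemma comm_iff_part (n : ℕ) (u v : U6n n) (hu : u ∉ Subgroup.center (U6n n))
    (hv : v ∉ Subgroup.center (U6n n)) :
    u * v = v * u ↔ part n u = part n v := by
  rw [mem_center_iff'] at hu hv
  rw [comm_iff]
  unfold part
  have h2 : ∀ e : ZMod 2, e = 0 ∨ e = 1 := by decide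
  rcases h2 (eR n u) with h1 | h1 <;> rcases h2 (eR n v) with h3 | h3 <;>
      simp only [h1, h3, if_pos rfl, if_neg (by decide : (1:ZMod 2) ≠ 0), if_true,
        reduceCtorEq, Option.some.injEq, iff_false]
  · simp [add_comm]
  · have hA : toAdd u.left ≠ 0 := fun h => hu ⟨h, h1⟩
    revert hA; generalize toAdd u.left = A; generalize toAdd v.left = B
    revert A B; decide
  · have hB : toAdd v.left ≠ 0 := fun h => hv ⟨h, h3⟩
    revert hB; generalize toAdd u.left = A; generalize toAdd v.left = B
    revert A B; decide
  · generalize toAdd u.left = A; generalize toAdd v.left = B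
    revert A B; decide

section Counting
variable (n : ℕ) [NeZero n]

instance : NeZero (2 * n) := ⟨by have := NeZero.ne n; omega⟩

lemma par_add (n : ℕ) (a b : ZMod (2*n)) : par n (a+b) = par n a + par n b :=
  map_add (ZMod.castHom (two_dvd n) (ZMod 2)) a b
lemma par_sub (n : ℕ) (a b : ZMod (2*n)) : par n (a-b) = par n a - par n b :=
  map_sub (ZMod.castHom (two_dvd n) (ZMod 2)) a b

lemma card_par_zero :
    (Finset.univ.filter (fun j : ZMod (2*n) => par n j = 0)).card = n := by
  classical
  have hsplit := Finset.card_filter_add_card_filter_not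
    (s := (Finset.univ : Finset (ZMod (2*n)))) (p := fun j => par n j = 0)
  have hcard : (Finset.univ : Finset (ZMod (2*n))).card = 2 * n := by
    simp [ZMod.card]
  have hne : ∀ e : ZMod 2, ¬ e = 0 ↔ e = 1 := by decide
  have heq : (Finset.univ.filter (fun j : ZMod (2*n) => ¬ par n j = 0)).card
      = (Finset.univ.filter (fun j : ZMod (2*n) => par n j = 0)).card := by
    apply Finset.card_bij (fun j _ => j + 1)
    · intro a ha
      simp only [Finset.mem_filter, Finset.mem_univ, true_and] at ha ⊢
      rw [par_add, par_one]
      rw [hne] at ha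
      rw [ha]; decide
    · intro a ha b hb hab
      have := congrArg (fun x => x - 1) hab; simpa [add_sub_cancel_right] using this
    · intro b hb
      refine ⟨b - 1, ?_, by ring⟩
      simp only [Finset.mem_filter, Finset.mem_univ, true_and] at hb ⊢
      rw [hne, par_sub, par_one, hb]
      decide
  omega

abbrev Vert (n : ℕ) := {x : U6n n // x ∉ Subgroup.center (U6n n)}

def prodEquiv : U6n n ≃ (Multiplicative (ZMod 3) × Multiplicative (ZMod (2*n))) :=
  ⟨fun u => (u.left, u.right), fun p => ⟨p.1, p.2⟩, fun u => rfl, fun p => rfl⟩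

noncomputable instance : Fintype (U6n n) := Fintype.ofEquiv _ (prodEquiv n).symm

noncomputable instance : Fintype (Vert n) := by classical exact Subtype.fintype _

open scoped Classical

lemma part_eq_none_iff (u : U6n n) : part n u = none ↔ eR n u = 0 := by
  unfold part
  rcases eq_or_ne (eR n u) 0 with h | h <;> simp [h]

lemma part_eq_some_iff (u : U6n n) (c : ZMod 3) :
    part n u = some c ↔ (eR n u = 1 ∧ toAdd u.left = c) := by
  unfold part
  have hne : ∀ e : ZMod 2, ¬ e = 0 ↔ e = 1 := by decide
  rcases eq_or_ne (eR n u) 0 with h | h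
  · rw [if_pos h, h]
    simp [(by decide : (0:ZMod 2) ≠ 1)]
  · rw [if_neg h, (hne _).mp h]
    simp

noncomputable def eqvNone : {v : Vert n // part n v.val = none} ≃
    ({x : ZMod 3 // x ≠ 0} × {j : ZMod (2*n) // par n j = 0}) where
  toFun v :=
    (⟨toAdd v.1.1.left, fun h => v.1.2 ((mem_center_iff' n _).mpr
        ⟨h, (part_eq_none_iff n _).mp v.2⟩)⟩,
     ⟨toAdd v.1.1.right, (part_eq_none_iff n _).mp v.2⟩)
  invFun p :=
    ⟨⟨⟨ofAdd p.1.1, ofAdd p.2.1⟩, by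
        rw [mem_center_iff']
        rintro ⟨h1, -⟩
        exact p.1.2 (by simpa using h1)⟩,
      by rw [part_eq_none_iff]; exact p.2.2⟩
  left_inv v := rfl
  right_inv p := rfl

noncomputable def eqvSome (c : ZMod 3) : {v : Vert n // part n v.val = some c} ≃
    {j : ZMod (2*n) // par n j = 1} where
  toFun v := ⟨toAdd v.1.1.right, ((part_eq_some_iff n _ c).mp v.2).1⟩
  invFun j :=
    ⟨⟨⟨ofAdd c, ofAdd j.1⟩, by
        rw [mem_center_iff']
        rintro ⟨-, h2⟩
        rw [show eR n (⟨ofAdd c, ofAdd j.1⟩ : U6n n) = par n j.1 from rfl, j.2] at h2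
        exact (by decide : (1:ZMod 2) ≠ 0) h2⟩,
      by rw [part_eq_some_iff]
         exact ⟨j.2, rfl⟩⟩
  left_inv v := by
    obtain ⟨⟨⟨l, r⟩, hv⟩, hp⟩ := v
    have := ((part_eq_some_iff n _ c).mp hp).2
    simp only [Subtype.mk.injEq, SemidirectProduct.ext_iff]
    exact ⟨congrArg ofAdd this.symm ▸ rfl, rfl⟩
  right_inv j := rfl

lemma card_fiber_none :
    (Finset.univ.filter (fun v : Vert n => part n v.val = none)).card = 2 * n := by
  classical
  rw [← Fintype.card_subtype, Fintype.card_congr (eqvNone n), Fintype.card_prod,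
    Fintype.card_subtype, Fintype.card_subtype, card_par_zero]
  congr 1

lemma card_fiber_some (c : ZMod 3) :
    (Finset.univ.filter (fun v : Vert n => part n v.val = some c)).card = n := by
  classical
  rw [← Fintype.card_subtype, Fintype.card_congr (eqvSome n c), Fintype.card_subtype]
  have hne : ∀ e : ZMod 2, e = 1 ↔ ¬ e = 0 := by decide
  have hsplit := Finset.card_filter_add_card_filter_not
    (s := (Finset.univ : Finset (ZMod (2*n)))) (p := fun j => par n j = 0)
  have hcard : (Finset.univ : Finset (ZMod (2*n))).card = 2 * n := by simp [ZMod.card]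
  have h0 := card_par_zero n
  have : (Finset.univ.filter (fun j : ZMod (2*n) => par n j = 1)).card
      = (Finset.univ.filter (fun j : ZMod (2*n) => ¬ par n j = 0)).card := by
    apply Finset.card_bij (fun j _ => j) <;> intros <;>
      simp_all [Finset.mem_filter, hne]
  omega

lemma card_vert : Fintype.card (Vert n) = 5 * n := by
  classical
  have h := Finset.card_eq_sum_card_fiberwise
    (s := (Finset.univ : Finset (Vert n))) (t := (Finset.univ : Finset (Option (ZMod 3))))
    (f := fun v => part n v.val) (fun x _ => Finset.mem_univ _)
  rw [← Fintype.card, Fintype.card] at *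
  rw [h, Fintype.sum_option]
  have : ∀ c : ZMod 3, (Finset.univ.filter (fun v : Vert n => part n v.val = some c)).card = n :=
    card_fiber_some n
  rw [card_fiber_none]
  rw [Finset.sum_congr rfl (fun c _ => this c), Finset.sum_const]
  simp [ZMod.card]
  ring

section Ham
variable {V P : Type*} [DecidableEq V] [DecidableEq P]

def HamInv (f : V → P) (s : Finset V) (u v : V) : Prop :=
  ∀ q : P, 2 * (s.filter (fun x => f x = q)).card + 1
    ≤ s.card + (if q = f u then 1 else 0) + (if q = f v then 1 else 0)

lemma select (f : V → P) (s : Finset V) (u v : V) (hu : u ∈ s) (hv : v ∈ s) (huv : u ≠ v)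
    (h3 : 3 ≤ s.card) (hinv : HamInv f s u v) :
    ∃ w ∈ s.erase u, w ≠ v ∧ f w ≠ f u ∧ HamInv f (s.erase u) w v := by
  set t := s.erase u with ht
  have hvt : v ∈ t := Finset.mem_erase.mpr ⟨fun h => huv h.symm, hv⟩
  have hM : t.card + 1 = s.card := by
    rw [ht, Finset.card_erase_of_mem hu]; omega
  have hM2 : 2 ≤ t.card := by omega
  have hct : ∀ q, (t.filter (fun x => f x = q)).card + (if q = f u then 1 else 0)
      = (s.filter (fun x => f x = q)).card := by
    intro q
    rw [ht, Finset.filter_erase]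
    rcases eq_or_ne q (f u) with h | h
    · rw [if_pos h, Finset.card_erase_of_mem (Finset.mem_filter.mpr ⟨hu, h.symm⟩)]
      have : 1 ≤ (s.filter (fun x => f x = q)).card :=
        Finset.card_pos.mpr ⟨u, Finset.mem_filter.mpr ⟨hu, h.symm⟩⟩
      omega
    · rw [if_neg h, Finset.erase_eq_of_notMem
        (fun hm => h ((Finset.mem_filter.mp hm).2.symm))]
      omega
  -- the invariant transferred to t, for q ≠ f u
  have hinv' : ∀ q, q ≠ f u → 2 * (t.filter (fun x => f x = q)).card + 1
      ≤ t.card + 1 + (if q = f v then 1 else 0) := by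
    intro q hq
    have h1 := hinv q
    have h2 := hct q
    rw [if_neg hq] at h1 h2
    omega
  have hfu : 2 * (t.filter (fun x => f x = f u)).card + 3
      ≤ t.card + 2 + (if f u = f v then 1 else 0) := by
    have h1 := hinv (f u)
    have h2 := hct (f u)
    rw [if_pos rfl] at h1 h2
    omega
  -- at most one critical class
  have two_crit : ∀ q q', q ≠ q' →
      2 * (t.filter (fun x => f x = q)).card = t.card + (if q = f v then 1 else 0) →
      2 * (t.filter (fun x => f x = q')).card = t.card + (if q' = f v then 1 else 0) →
      False := by
    intro q q' hqq' hc hc'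
    have hdisj : Disjoint (t.filter (fun x => f x = q)) (t.filter (fun x => f x = q')) := by
      rw [Finset.disjoint_left]
      intro a ha ha'
      exact hqq' ((Finset.mem_filter.mp ha).2.symm.trans (Finset.mem_filter.mp ha').2)
    have hsub : (t.filter (fun x => f x = q)) ∪ (t.filter (fun x => f x = q')) ⊆ t :=
      Finset.union_subset (Finset.filter_subset _ _) (Finset.filter_subset _ _)
    have hle : (t.filter (fun x => f x = q)).card + (t.filter (fun x => f x = q')).card
        ≤ t.card := by
      rw [← Finset.card_union_of_disjoint hdisj]
      exact Finset.card_le_card hsub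
    have hq0 : q ≠ f v ∧ q' ≠ f v := by
      constructor <;> intro h <;> rw [if_pos h] at *
      · rcases eq_or_ne q' (f v) with h' | h'
        · exact hqq' (h.trans h'.symm)
        · rw [if_neg h'] at hc'; omega
      · rcases eq_or_ne q (f v) with h' | h'
        · exact hqq' (h'.trans h.symm)
        · rw [if_neg h'] at hc; omega
    rw [if_neg hq0.1] at hc
    rw [if_neg hq0.2] at hc'
    have hvnot : v ∉ (t.filter (fun x => f x = q)) ∪ (t.filter (fun x => f x = q')) := by
      rw [Finset.mem_union]
      rintro (h | h)
      · exact hq0.1 ((Finset.mem_filter.mp h).2 ▸ rfl)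
      · exact hq0.2 ((Finset.mem_filter.mp h).2 ▸ rfl)
    have hsub' : (t.filter (fun x => f x = q)) ∪ (t.filter (fun x => f x = q')) ⊆ t.erase v :=
      fun a ha => Finset.mem_erase.mpr ⟨fun h => hvnot (h ▸ ha), hsub ha⟩
    have hle' : (t.filter (fun x => f x = q)).card + (t.filter (fun x => f x = q')).card
        ≤ t.card - 1 := by
      rw [← Finset.card_union_of_disjoint hdisj]
      calc _ ≤ (t.erase v).card := Finset.card_le_card hsub'
      _ = t.card - 1 := Finset.card_erase_of_mem hvt
    omega
  by_cases hcrit : ∃ q, q ≠ f u ∧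
      2 * (t.filter (fun x => f x = q)).card = t.card + (if q = f v then 1 else 0)
  · obtain ⟨q, hqu, hqeq⟩ := hcrit
    -- pick w in class q, w ≠ v
    have hw : ∃ w ∈ t.filter (fun x => f x = q), w ≠ v := by
      rcases eq_or_ne q (f v) with h | h
      · rw [if_pos h] at hqeq
        have : 1 < (t.filter (fun x => f x = q)).card := by omega
        exact Finset.exists_mem_ne this v
      · rw [if_neg h] at hqeq
        have : 0 < (t.filter (fun x => f x = q)).card := by omega
        obtain ⟨w, hwmem⟩ := Finset.card_pos.mp this
        exact ⟨w, hwmem, fun he => h (((Finset.mem_filter.mp hwmem).2).symm.trans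
          (congrArg f he) |>.symm ▸ rfl)⟩
    obtain ⟨w, hwmem, hwv⟩ := hw
    obtain ⟨hwt, hfw⟩ := Finset.mem_filter.mp hwmem
    refine ⟨w, hwt, hwv, hfw.symm ▸ hqu, ?_⟩
    intro q'
    rcases eq_or_ne q' q with rfl | hq'q
    · rw [hfw, if_pos rfl]
      omega
    · rw [if_neg (hfw ▸ hq'q)]
      rcases eq_or_ne q' (f u) with rfl | hq'u
      · have := hfu
        rcases eq_or_ne (f u) (f v) with h | h
        · rw [if_pos h] at *; omega
        · rw [if_neg h] at *; omega
      · have h1 := hinv' q' hq'u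
        rcases eq_or_ne (2 * (t.filter (fun x => f x = q')).card)
            (t.card + (if q' = f v then 1 else 0)) with he | he
        · exact absurd he (fun he => two_crit q' q hq'q he hqeq)
        · omega
  · push_neg at hcrit
    -- pick any w ∈ t with f w ≠ f u, w ≠ v
    have hcardW : t.card = (t.filter (fun x => ¬ f x = f u)).card
        + (t.filter (fun x => f x = f u)).card := by
      rw [add_comm]
      exact (Finset.card_filter_add_card_filter_not _).symm
    have hw : ∃ w ∈ t.filter (fun x => ¬ f x = f u), w ≠ v := by
      rcases eq_or_ne (f u) (f v) with h | h
      · rw [if_pos h] at hfu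
        have hpos : 0 < (t.filter (fun x => ¬ f x = f u)).card := by omega
        obtain ⟨w, hwmem⟩ := Finset.card_pos.mp hpos
        refine ⟨w, hwmem, fun he => ?_⟩
        exact (Finset.mem_filter.mp hwmem).2 (he ▸ h.symm)
      · rw [if_neg h] at hfu
        have : 1 < (t.filter (fun x => ¬ f x = f u)).card := by omega
        exact Finset.exists_mem_ne this v
    obtain ⟨w, hwmem, hwv⟩ := hw
    obtain ⟨hwt, hfw⟩ := Finset.mem_filter.mp hwmem
    refine ⟨w, hwt, hwv, hfw, ?_⟩
    intro q'
    rcases eq_or_ne q' (f u) with rfl | hq'u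
    · rw [if_neg (fun h => hfw h.symm)]
      rcases eq_or_ne (f u) (f v) with h | h
      · rw [if_pos h] at *; omega
      · rw [if_neg h] at *; omega
    · have h1 := hinv' q' hq'u
      have h2 := hcrit q' hq'u
      omega
end Ham

lemma ham_path {V P : Type*} [DecidableEq V] [DecidableEq P] (f : V → P) (G : SimpleGraph V)
    (hG : ∀ a b : V, a ≠ b → f a ≠ f b → G.Adj a b) :
    ∀ (N : ℕ) (s : Finset V) (u v : V), s.card = N → u ∈ s → v ∈ s → u ≠ v →
      HamInv f s u v →
      ∃ p : G.Walk u v, p.IsPath ∧ p.support.toFinset = s := by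
  intro N
  induction N using Nat.strong_induction_on with
  | _ N ih =>
    intro s u v hN hu hv huv hinv
    have hsub : ({u, v} : Finset V) ⊆ s := by
      intro x hx
      rcases Finset.mem_insert.mp hx with rfl | hx
      · exact hu
      · exact (Finset.mem_singleton.mp hx) ▸ hv
    have hcard2 : ({u, v} : Finset V).card = 2 := Finset.card_pair huv
    have h2 : 2 ≤ s.card := hcard2 ▸ Finset.card_le_card hsub
    rcases eq_or_lt_of_le h2 with hbase | hstep
    · -- base case : s = {u, v}
      have hs : s = {u, v} := (Finset.eq_of_subset_of_card_le hsub (by omega)).symm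
      have hfne : f u ≠ f v := by
        intro h
        have hmem : ({u, v} : Finset V) ⊆ s.filter (fun x => f x = f u) := by
          intro x hx
          rcases Finset.mem_insert.mp hx with rfl | hx
          · exact Finset.mem_filter.mpr ⟨hu, rfl⟩
          · exact (Finset.mem_singleton.mp hx) ▸ Finset.mem_filter.mpr ⟨hv, h.symm⟩
        have hge : 2 ≤ (s.filter (fun x => f x = f u)).card :=
          hcard2 ▸ Finset.card_le_card hmem
        have h5 := hinv (f u)
        rw [if_pos rfl, if_pos h] at h5
        omega
      refine ⟨SimpleGraph.Walk.cons (hG u v huv hfne) SimpleGraph.Walk.nil, ?_, ?_⟩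
      · simp [SimpleGraph.Walk.cons_isPath_iff, huv]
      · simp [hs]
    · -- inductive step
      obtain ⟨w, hwt, hwv, hfwu, hinv'⟩ :=
        select f s u v hu hv huv (by omega) hinv
      obtain ⟨hwu, hws⟩ := Finset.mem_erase.mp hwt
      obtain ⟨p, hp, hps⟩ := ih (N - 1) (by omega) (s.erase u) w v
        (by rw [Finset.card_erase_of_mem hu]; omega) hwt
        (Finset.mem_erase.mpr ⟨fun h => huv h.symm, hv⟩) hwv hinv'
      have hadj : G.Adj u w := hG u w (fun h => hwu h.symm) (fun h => hfwu h.symm)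
      refine ⟨SimpleGraph.Walk.cons hadj p, ?_, ?_⟩
      · rw [SimpleGraph.Walk.cons_isPath_iff]
        refine ⟨hp, fun hmem => ?_⟩
        have : u ∈ s.erase u := hps ▸ List.mem_toFinset.mpr hmem
        exact (Finset.notMem_erase u s) this
      · rw [SimpleGraph.Walk.support_cons, List.toFinset_cons, hps,
          Finset.insert_erase hu]


/-- For every pair of distinct vertices `u, v` of the non-commuting graph of `U_{6n}`,
the detour distance `D(u,v)` (the maximum length of a path from `u` to `v`) equals
`5n - 1`. -/
theorem U6n_detour_distance (n : ℕ) (hn : 1 ≤ n)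
    (u v : {x : U6n n // x ∉ Subgroup.center (U6n n)}) (huv : u ≠ v) :
    IsGreatest {k | ∃ p : (ncGraph n).Walk u v, p.IsPath ∧ p.length = k}
      (5 * n - 1) := by
  classical
  haveI : NeZero n := ⟨by omega⟩
  constructor
  · -- there is a Hamiltonian path
    have hG : ∀ a b : Vert n, a ≠ b → part n a.val ≠ part n b.val → (ncGraph n).Adj a b := by
      intro a b _ hf; show _ ≠ _; intro hc
      exact hf ((comm_iff_part n a.val b.val a.2 b.2).mp hc)
    have hcardu : (Finset.univ : Finset (Vert n)).card = 5 * n := by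
      rw [← Fintype.card]; exact card_vert n
    have hinv : HamInv (fun x : Vert n => part n x.val) Finset.univ u v := by
      intro q
      rcases q with _ | c
      · have := card_fiber_none n
        rw [Finset.filter_congr_decidable] at this ⊢
        rw [this, hcardu]
        have i1 : (if (none : Option (ZMod 3)) = part n u.val then 1 else 0) + (if (none : Option (ZMod 3)) = part n v.val then 1 else 0) ≥ 0 := by positivity
        omega
      · have := card_fiber_some n c
        rw [Finset.filter_congr_decidable] at this ⊢
        rw [this, hcardu]
        have i1 : (if (some c : Option (ZMod 3)) = part n u.val then 1 else 0) + (if (some c : Option (ZMod 3)) = part n v.val then 1 else 0) ≥ 0 := by positivity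
        omega
    obtain ⟨p, hp, hps⟩ := ham_path (fun x : Vert n => part n x.val) (ncGraph n) hG
      (5 * n) Finset.univ u v hcardu (Finset.mem_univ u) (Finset.mem_univ v) huv hinv
    refine ⟨p, hp, ?_⟩
    have hlen : p.support.length = p.length + 1 := SimpleGraph.Walk.length_support p
    have hnodup := hp.support_nodup
    have : p.support.toFinset.card = p.support.length := List.toFinset_card_of_nodup hnodup
    rw [hps, hcardu] at this
    omega
  · rintro k ⟨p, hp, rfl⟩
    have h1 : p.length < Fintype.card (Vert n) := hp.length_lt
    rw [card_vert n] at h1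
    omega
end Counting
end

section
/- Let n ≥ 1 and let Γ = Γ(U_{6n}) be the non-commuting graph of U_{6n}. The number s_k of independent sets of Γ of cardinality k is: s_0 = 1; s_k = C(2n, k) + 3·C(n, k) for 1 ≤ k ≤ n; s_k = C(2n, k) for n < k ≤ 2n; and s_k = 0 for k > 2n (where C(m, k) denotes the binomial coefficient). Equivalently, the independence polynomial of Γ is I(Γ; x) = 1 + Σ_{k=1}^{n} (C(2n,k) + 3·C(n,k)) x^k + Σ_{k=n+1}^{2n} C(2n,k) x^k. -/
/-- The number of independent sets of cardinality `k` of the non-commuting graph of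
`U_{6n}`, i.e. the `k`-th coefficient of the independence polynomial. -/
noncomputable def indepCount (n k : ℕ) : ℕ :=
  {S : Finset {x : U6n n // x ∉ Subgroup.center (U6n n)} |
    (S : Set _).Pairwise (fun u v => ¬ (ncGraph n).Adj u v) ∧ S.card = k}.ncard

----------------
-- Auxiliary development
----------------

instance twoMulNeZero (n : ℕ) [NeZero n] : NeZero (2 * n) :=
  ⟨by have := NeZero.ne n; omega⟩

/-- The parity character on `ZMod (2*n)`. -/
def eps (n : ℕ) : ZMod (2 * n) →+* ZMod 2 := ZMod.castHom (dvd_mul_right 2 n) (ZMod 2)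

lemma eps_eq_zero_iff (n : ℕ) [NeZero n] (m : ZMod (2 * n)) :
    eps n m = 0 ↔ Even m.val := by
  rw [eps, ZMod.castHom_apply, ← ZMod.natCast_val, ZMod.natCast_eq_zero_iff]
  exact (even_iff_two_dvd).symm

lemma U6nAct_apply (n : ℕ) [NeZero n] (y : Multiplicative (ZMod (2 * n)))
    (x : Multiplicative (ZMod 3)) :
    U6nAct n y x = if eps n (Multiplicative.toAdd y) = 0 then x else x⁻¹ := by
  set m : ZMod (2 * n) := Multiplicative.toAdd y with hm
  have hv : ((m.val : ℤ) : ZMod (2 * n)) = m := by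
    push_cast
    rw [ZMod.natCast_val, ZMod.cast_id]
  have h1 : U6nAct n y = negAut ^ m.val := by
    have hy : y = Multiplicative.ofAdd (((m.val : ℤ) : ZMod (2 * n))) := by
      rw [hv, hm, ofAdd_toAdd]
    rw [hy]
    simp only [U6nAct, AddMonoidHom.toMultiplicativeLeft, Equiv.coe_fn_mk, MonoidHom.coe_mk,
      OneHom.coe_mk, toAdd_ofAdd, ZMod.lift_coe]
    show Additive.toMul ((ZMod.lift (2 * n) _) (Multiplicative.toAdd
      (Multiplicative.ofAdd ((m.val : ℤ) : ZMod (2 * n))))) = _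
    rw [toAdd_ofAdd, ZMod.lift_coe]
    rw [zmultiplesHom_apply, toMul_zsmul, toMul_ofMul, zpow_natCast]
  rw [h1]
  by_cases h : eps n m = 0
  · rw [if_pos h]
    obtain ⟨c, hc⟩ := (eps_eq_zero_iff n m).mp h
    have : negAut ^ m.val = 1 := by
      rw [hc, ← two_mul, pow_mul, pow_two, negAut_sq, one_pow]
    rw [this]; rfl
  · rw [if_neg h]
    have hodd : ¬ Even m.val := fun he => h ((eps_eq_zero_iff n m).mpr he)
    obtain ⟨c, hc⟩ := Nat.not_even_iff_odd.mp hodd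
    have : negAut ^ m.val = negAut := by
      rw [hc, pow_succ, pow_mul, pow_two, negAut_sq, one_pow, one_mul]
    rw [this]; rfl

lemma comm_iff_s19 (n : ℕ) [NeZero n] (g h : U6n n) :
    g * h = h * g ↔
      g.left * (U6nAct n g.right) h.left = h.left * (U6nAct n h.right) g.left := by
  constructor
  · intro e
    have := congrArg SemidirectProduct.left e
    simpa [SemidirectProduct.mul_left] using this
  · intro e
    ext
    · simpa [SemidirectProduct.mul_left] using congrArg Multiplicative.toAdd e
    · simp [SemidirectProduct.mul_right, mul_comm]

lemma mem_center_iff (n : ℕ) [NeZero n] (g : U6n n) :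
    g ∈ Subgroup.center (U6n n) ↔
      g.left = 1 ∧ eps n (Multiplicative.toAdd g.right) = 0 := by
  rw [Subgroup.mem_center_iff]
  constructor
  · intro h
    have ha := (comm_iff_s19 n g (Ua n)).mp (h (Ua n)).symm
    have hb := (comm_iff_s19 n g (Ub n)).mp (h (Ub n)).symm
    rw [U6nAct_apply, U6nAct_apply] at ha hb
    simp only [Ua, Ub, SemidirectProduct.left_inr, SemidirectProduct.right_inr,
      SemidirectProduct.left_inl, SemidirectProduct.right_inl] at ha hb
    have h1 : eps n (Multiplicative.toAdd (Multiplicative.ofAdd (1 : ZMod (2*n)))) = 1 := by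
      rw [toAdd_ofAdd]; exact map_one _
    have h0 : eps n (Multiplicative.toAdd (1 : Multiplicative (ZMod (2*n)))) = 0 := by
      rw [toAdd_one]; exact map_zero _
    simp only [h1, h0, one_ne_zero, if_false, if_true, inv_one, ite_self, one_mul, mul_one] at ha hb
    -- ha : g.left = g.left⁻¹
    have key : ∀ x : Multiplicative (ZMod 3), x = x⁻¹ → x = 1 := by decide
    have hleft : g.left = 1 := key _ ha
    refine ⟨hleft, ?_⟩
    by_contra hcond
    rw [if_neg hcond, hleft] at hb
    revert hb; decide
  · rintro ⟨h1, h2⟩ h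
    rw [comm_iff_s19, U6nAct_apply, U6nAct_apply, h1, h2, if_pos rfl]
    simp


abbrev Vtx (n : ℕ) := {x : U6n n // x ∉ Subgroup.center (U6n n)}

noncomputable instance U6nFintype (n : ℕ) [NeZero n] : Fintype (U6n n) :=
  Fintype.ofEquiv (Multiplicative (ZMod 3) × Multiplicative (ZMod (2 * n)))
    ⟨fun p => ⟨p.1, p.2⟩, fun g => (g.left, g.right), fun _ => rfl, fun _ => rfl⟩

noncomputable instance VtxFintype (n : ℕ) [NeZero n] : Fintype (Vtx n) :=
  @Subtype.fintype _ _ (fun _ => Classical.propDecidable _) _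

/-- The label of a noncentral element: `inr ()` if the `a`-part is even,
otherwise `inl` of the `b`-part. -/
def lab (n : ℕ) (v : Vtx n) : Multiplicative (ZMod 3) ⊕ Unit :=
  if eps n (Multiplicative.toAdd v.val.right) = 0 then Sum.inr () else Sum.inl v.val.left

lemma comm_iff_lab (n : ℕ) [NeZero n] (u v : Vtx n) :
    u.val * v.val = v.val * u.val ↔ lab n u = lab n v := by
  rw [comm_iff_s19, U6nAct_apply, U6nAct_apply]
  unfold lab
  by_cases hu : eps n (Multiplicative.toAdd u.val.right) = 0 <;>
    by_cases hv : eps n (Multiplicative.toAdd v.val.right) = 0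
  · rw [if_pos hu, if_pos hv, if_pos hu, if_pos hv]
    simp [mul_comm]
  · have hul : u.val.left ≠ 1 := fun e => u.property ((mem_center_iff n _).mpr ⟨e, hu⟩)
    rw [if_pos hu, if_neg hv, if_pos hu, if_neg hv]
    have key : ∀ x y : Multiplicative (ZMod 3), x ≠ 1 → ¬ (x * y = y * x⁻¹) := by decide
    exact iff_of_false (key _ _ hul) (by simp)
  · have hvl : v.val.left ≠ 1 := fun e => v.property ((mem_center_iff n _).mpr ⟨e, hv⟩)
    rw [if_neg hu, if_pos hv, if_neg hu, if_pos hv]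
    have key : ∀ x y : Multiplicative (ZMod 3), y ≠ 1 → ¬ (x * y⁻¹ = y * x) := by decide
    exact iff_of_false (key _ _ hvl) (by simp)
  · rw [if_neg hu, if_neg hv, if_neg hu, if_neg hv]
    have key : ∀ x y : Multiplicative (ZMod 3), (x * y⁻¹ = y * x⁻¹) ↔ x = y := by decide
    rw [key]
    simp

lemma indep_iff (n : ℕ) [NeZero n] (S : Finset (Vtx n)) :
    ((S : Set (Vtx n)).Pairwise fun u v => ¬ (ncGraph n).Adj u v) ↔
      ∀ u ∈ S, ∀ v ∈ S, lab n u = lab n v := by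
  constructor
  · intro h u hu v hv
    by_cases e : u = v
    · rw [e]
    · have h2 : ¬ (ncGraph n).Adj u v :=
        h (Finset.mem_coe.mpr hu) (Finset.mem_coe.mpr hv) e
      have h2' : ¬ (u.val * v.val ≠ v.val * u.val) := h2
      exact (comm_iff_lab n u v).mp (not_not.mp h2')
  · intro h u hu v hv _
    have hc : u.val * v.val = v.val * u.val :=
      (comm_iff_lab n u v).mpr (h u (Finset.mem_coe.mp hu) v (Finset.mem_coe.mp hv))
    exact fun hadj => hadj hc

/-- The `lab`-fiber as a finset. -/
noncomputable def fib (n : ℕ) [NeZero n] (ℓ : Multiplicative (ZMod 3) ⊕ Unit) :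
    Finset (Vtx n) :=
  Finset.univ.filter (fun v => lab n v = ℓ)

lemma zmod2_ne_zero : ∀ z : ZMod 2, z ≠ 0 → z = 1 := by decide

lemma card_eps (n : ℕ) [NeZero n] :
    (Finset.univ.filter (fun y : ZMod (2*n) => eps n y = 1)).card = n ∧
    (Finset.univ.filter (fun y : ZMod (2*n) => eps n y = 0)).card = n := by
  have htot : (Finset.univ.filter (fun y : ZMod (2*n) => eps n y = 0)).card
      + (Finset.univ.filter (fun y : ZMod (2*n) => ¬ eps n y = 0)).card = 2*n := by
    rw [Finset.card_filter_add_card_filter_not, Finset.card_univ, ZMod.card]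
  have hne : (Finset.univ.filter (fun y : ZMod (2*n) => ¬ eps n y = 0))
      = (Finset.univ.filter (fun y : ZMod (2*n) => eps n y = 1)) := by
    apply Finset.filter_congr
    intro y _
    constructor
    · exact zmod2_ne_zero _
    · intro h; rw [h]; exact one_ne_zero
  have hbij : (Finset.univ.filter (fun y : ZMod (2*n) => eps n y = 0)).card
      = (Finset.univ.filter (fun y : ZMod (2*n) => eps n y = 1)).card := by
    apply Finset.card_bij (fun y _ => y + 1)
    · intro a ha
      simp only [Finset.mem_filter, Finset.mem_univ, true_and] at ha ⊢
      rw [map_add, ha, map_one, zero_add]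
    · intro a _ b _ h
      exact add_right_cancel h
    · intro b hb
      simp only [Finset.mem_filter, Finset.mem_univ, true_and] at hb
      refine ⟨b - 1, ?_, by ring⟩
      simp only [Finset.mem_filter, Finset.mem_univ, true_and]
      rw [map_sub, hb, map_one, sub_self]
  rw [hne] at htot
  omega

lemma card_fib_inl (n : ℕ) [NeZero n] (x : Multiplicative (ZMod 3)) :
    (fib n (Sum.inl x)).card = n := by
  refine Eq.trans ?_ (card_eps n).1
  apply Finset.card_bij (fun (v : Vtx n) _ => Multiplicative.toAdd v.val.right)
  · intro v hv
    simp only [fib, Finset.mem_filter, Finset.mem_univ, true_and] at hv ⊢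
    unfold lab at hv
    by_cases h : eps n (Multiplicative.toAdd v.val.right) = 0
    · rw [if_pos h] at hv; exact absurd hv (by simp)
    · exact zmod2_ne_zero _ h
  · intro u hu v hv h
    simp only [fib, Finset.mem_filter, Finset.mem_univ, true_and] at hu hv
    unfold lab at hu hv
    by_cases h1 : eps n (Multiplicative.toAdd u.val.right) = 0
    · rw [if_pos h1] at hu; exact absurd hu (by simp)
    by_cases h2 : eps n (Multiplicative.toAdd v.val.right) = 0
    · rw [if_pos h2] at hv; exact absurd hv (by simp)
    rw [if_neg h1] at hu
    rw [if_neg h2] at hv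
    simp only [Sum.inl.injEq] at hu hv
    apply Subtype.ext
    ext
    · rw [hu, hv]
    · exact congrArg Multiplicative.ofAdd h
  · intro y hy
    simp only [Finset.mem_filter, Finset.mem_univ, true_and] at hy
    have hnc : (⟨x, Multiplicative.ofAdd y⟩ : U6n n) ∉ Subgroup.center (U6n n) := by
      rw [mem_center_iff]
      rintro ⟨-, h0⟩
      rw [toAdd_ofAdd, hy] at h0
      exact one_ne_zero h0
    refine ⟨⟨⟨x, Multiplicative.ofAdd y⟩, hnc⟩, ?_, by simp⟩
    simp only [fib, Finset.mem_filter, Finset.mem_univ, true_and]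
    unfold lab
    have : eps n (Multiplicative.toAdd
        (Multiplicative.ofAdd y : Multiplicative (ZMod (2*n)))) ≠ 0 := by
      rw [toAdd_ofAdd, hy]; exact one_ne_zero
    rw [if_neg this]

lemma card_fib_inr (n : ℕ) [NeZero n] : (fib n (Sum.inr ())).card = 2 * n := by
  have h3 : (Finset.univ.filter (fun x : Multiplicative (ZMod 3) => x ≠ 1)).card = 2 := by
    decide
  have h2n : ((Finset.univ.filter (fun x : Multiplicative (ZMod 3) => x ≠ 1)) ×ˢ
      (Finset.univ.filter (fun y : ZMod (2*n) => eps n y = 0))).card = 2 * n := by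
    rw [Finset.card_product, h3, (card_eps n).2]
  refine Eq.trans ?_ h2n
  apply Finset.card_bij (fun (v : Vtx n) _ => (v.val.left, Multiplicative.toAdd v.val.right))
  · intro v hv
    simp only [fib, Finset.mem_filter, Finset.mem_univ, true_and] at hv
    unfold lab at hv
    by_cases h : eps n (Multiplicative.toAdd v.val.right) = 0
    · rw [Finset.mem_product]
      simp only [Finset.mem_filter, Finset.mem_univ, true_and]
      refine ⟨fun e => v.property ((mem_center_iff n _).mpr ⟨e, h⟩), h⟩
    · rw [if_neg h] at hv; exact absurd hv (by simp)
  · intro u hu v hv h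
    simp only [Prod.mk.injEq] at h
    apply Subtype.ext
    ext
    · exact h.1
    · exact congrArg Multiplicative.ofAdd h.2
  · rintro ⟨x, y⟩ hxy
    rw [Finset.mem_product] at hxy
    simp only [Finset.mem_filter, Finset.mem_univ, true_and] at hxy
    have hnc : (⟨x, Multiplicative.ofAdd y⟩ : U6n n) ∉ Subgroup.center (U6n n) := by
      rw [mem_center_iff]
      rintro ⟨h0, -⟩
      exact hxy.1 h0
    refine ⟨⟨⟨x, Multiplicative.ofAdd y⟩, hnc⟩, ?_, by simp⟩
    simp only [fib, Finset.mem_filter, Finset.mem_univ, true_and]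
    unfold lab
    have : eps n (Multiplicative.toAdd
        (Multiplicative.ofAdd y : Multiplicative (ZMod (2*n)))) = 0 := by
      rw [toAdd_ofAdd]; exact hxy.2
    rw [if_pos this]

lemma indepCount_eq (n k : ℕ) [NeZero n] (hk : 1 ≤ k) :
    indepCount n k = Nat.choose (2*n) k + 3 * Nat.choose n k := by
  classical
  have hset : {S : Finset (Vtx n) |
      ((S : Set (Vtx n)).Pairwise fun u v => ¬ (ncGraph n).Adj u v) ∧ S.card = k}
      = ↑((Finset.univ : Finset (Multiplicative (ZMod 3) ⊕ Unit)).biUnion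
          (fun ℓ => (fib n ℓ).powersetCard k)) := by
    ext S
    simp only [Set.mem_setOf_eq, Finset.mem_coe, Finset.mem_biUnion, Finset.mem_univ,
      true_and, Finset.mem_powersetCard]
    constructor
    · rintro ⟨hp, hcard⟩
      obtain ⟨v0, hv0⟩ : S.Nonempty := Finset.card_pos.mp (by omega)
      refine ⟨lab n v0, ?_, hcard⟩
      intro v hv
      simp only [fib, Finset.mem_filter, Finset.mem_univ, true_and]
      exact (indep_iff n S).mp hp v hv v0 hv0
    · rintro ⟨ℓ, hsub, hcard⟩
      refine ⟨(indep_iff n S).mpr ?_, hcard⟩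
      intro u hu v hv
      have h1 := hsub hu
      have h2 := hsub hv
      simp only [fib, Finset.mem_filter, Finset.mem_univ, true_and] at h1 h2
      rw [h1, h2]
  rw [indepCount, hset, Set.ncard_coe_finset]
  rw [Finset.card_biUnion]
  · simp only [Finset.card_powersetCard]
    rw [Fintype.sum_sum_type]
    have hu : ∀ a : Unit, fib n (Sum.inr a) = fib n (Sum.inr ()) := fun _ => rfl
    simp only [card_fib_inl, hu, card_fib_inr]
    rw [Finset.sum_const, Finset.sum_const, Finset.card_univ, Finset.card_univ]
    have hc3 : Fintype.card (Multiplicative (ZMod 3)) = 3 := by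
      simp
    have hcu : Fintype.card Unit = 1 := by simp
    rw [hc3, hcu, smul_eq_mul, smul_eq_mul, one_mul]
    ring
  · intro ℓ _ ℓ' _ hne
    rw [Function.onFun, Finset.disjoint_left]
    intro S hS hS'
    rw [Finset.mem_powersetCard] at hS hS'
    obtain ⟨v, hv⟩ : S.Nonempty := Finset.card_pos.mp (by omega)
    have h1 := hS.1 hv
    have h2 := hS'.1 hv
    simp only [fib, Finset.mem_filter, Finset.mem_univ, true_and] at h1 h2
    exact hne (h1 ▸ h2 ▸ rfl)

/-- The independence polynomial of the non-commuting graph of `U_{6n}`: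
`s₀ = 1`, `s_k = C(2n,k) + 3·C(n,k)` for `1 ≤ k ≤ n`, `s_k = C(2n,k)` for `n < k ≤ 2n`,
and `s_k = 0` for `k > 2n`. -/
theorem U6n_independence_polynomial (n : ℕ) (hn : 1 ≤ n) :
    indepCount n 0 = 1 ∧
    (∀ k, 1 ≤ k → k ≤ n →
      indepCount n k = Nat.choose (2 * n) k + 3 * Nat.choose n k) ∧
    (∀ k, n < k → k ≤ 2 * n → indepCount n k = Nat.choose (2 * n) k) ∧
    (∀ k, 2 * n < k → indepCount n k = 0) := by
  haveI : NeZero n := ⟨by omega⟩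
  refine ⟨?_, ?_, ?_, ?_⟩
  · have hz : {S : Finset (Vtx n) |
        ((S : Set (Vtx n)).Pairwise fun u v => ¬ (ncGraph n).Adj u v) ∧ S.card = 0}
        = {(∅ : Finset (Vtx n))} := by
      ext S
      simp only [Set.mem_setOf_eq, Set.mem_singleton_iff, Finset.card_eq_zero]
      constructor
      · rintro ⟨-, h⟩; exact h
      · rintro rfl
        exact ⟨by simp, rfl⟩
    rw [indepCount, hz, Set.ncard_singleton]
  · intro k hk1 _
    exact indepCount_eq n k hk1
  · intro k hk1 _
    rw [indepCount_eq n k (by omega), Nat.choose_eq_zero_of_lt hk1, mul_zero, add_zero]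
  · intro k hk
    rw [indepCount_eq n k (by omega), Nat.choose_eq_zero_of_lt hk,
      Nat.choose_eq_zero_of_lt (by omega), mul_zero, add_zero]
end
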